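/- Let n ≥ 2 and 0 < σ < 1/2. There exist constants c, C > 0 depending only on n such that for all 0 < δ < 1 with δ^σ ≤ 1/2, δ^{1-σ} ≤ 1/40 and δ^{1-2σ} ≤ 1/80, the Lebesgue measure of Ω satisfies c δ^{(σ-1)(n-1) + 2σ - 1} ≤ |Ω| ≤ C δ^{(σ-1)(n-1) + 2σ - 1}. -/

import Mathlib

open Real MeasureTheory

private lemma coord_dist_le' {n : ℕ} (x y : EuclideanSpace ℝ (Fin n)) (j : Fin n) :
    dist (x j) (y j) ≤ dist x y := by
  have h1 : dist (x j) (y j) ^ 2 ≤ ∑ i, dist (x i) (y i) ^ 2 :=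
    Finset.single_le_sum (f := fun i => dist (x i) (y i) ^ 2)
      (fun i _ => sq_nonneg _) (Finset.mem_univ j)
  have h2 := Real.sqrt_le_sqrt h1
  rw [Real.sqrt_sq dist_nonneg] at h2
  rw [EuclideanSpace.dist_eq]
  exact h2

/-- For `n ≥ 2` there are constants `c, C > 0` depending only on `n` such
that for all admissible `σ, δ` the Lebesgue measure of `Ω` (the union of unit balls centred
at the points of `Λ`) satisfies `c δ^{(σ-1)(n-1)+2σ-1} ≤ |Ω| ≤ C δ^{(σ-1)(n-1)+2σ-1}`. -/
theorem stmt7 (n : ℕ) (hn : 2 ≤ n) :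
    ∃ c C : ℝ, 0 < c ∧ 0 < C ∧
      ∀ σ δ : ℝ, 0 < σ → σ < 1/2 → 0 < δ → δ < 1 →
        δ ^ σ ≤ 1/2 → δ ^ (1 - σ) ≤ 1/40 → δ ^ (1 - 2*σ) ≤ 1/80 →
      ∀ Λ : Set (EuclideanSpace ℝ (Fin n)),
        Λ = {z : EuclideanSpace ℝ (Fin n) |
              (∀ j : Fin n, (j : ℕ) < n - 1 →
                ∃ p : ℕ, (p : ℝ) ≤ (1/40) * δ ^ (σ - 1) ∧ z j = (p : ℝ) * δ ^ (-σ)) ∧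
              (∃ q : ℕ, (q : ℝ) ≤ (1/80) * δ ^ (2*σ - 1) ∧
                z ⟨n - 1, by omega⟩ = 2 * (q : ℝ) * δ ^ (-(2*σ)))} →
        ENNReal.ofReal (c * δ ^ ((σ - 1) * ((n : ℝ) - 1) + 2*σ - 1)) ≤
            volume (⋃ z ∈ Λ, Metric.closedBall z 1) ∧
          volume (⋃ z ∈ Λ, Metric.closedBall z 1) ≤
            ENNReal.ofReal (C * δ ^ ((σ - 1) * ((n : ℝ) - 1) + 2*σ - 1)) := by
  classical
  set m : ℕ := n - 1 with hm
  set ωb : ENNReal := volume (Metric.ball (0 : EuclideanSpace ℝ (Fin n)) 1) with hωb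
  set ωc : ENNReal := volume (Metric.closedBall (0 : EuclideanSpace ℝ (Fin n)) 1) with hωc
  have hωb0 : 0 < ωb := Metric.measure_ball_pos _ _ one_pos
  have hωbt : ωb ≠ ⊤ := measure_ball_lt_top.ne
  have hωct : ωc ≠ ⊤ := measure_closedBall_lt_top.ne
  have hωbr : 0 < ωb.toReal := ENNReal.toReal_pos hωb0.ne' hωbt
  have hωcr : 0 < ωc.toReal := ENNReal.toReal_pos
    ((hωb0.trans_le (measure_mono Metric.ball_subset_closedBall)).ne') hωct
  refine ⟨(1/40 : ℝ)^m * (1/80) * ωb.toReal, 2^n * (1/40 : ℝ)^m * (1/80) * ωc.toReal,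
    by positivity, by positivity, ?_⟩
  intro σ δ hσ hσ2 hδ0 hδ1 h2 h40 h80 Λ hΛ
  set e : ℝ := (σ - 1) * ((n : ℝ) - 1) + 2*σ - 1 with he
  set A : ℝ := (1/40) * δ ^ (σ - 1) with hA
  set B : ℝ := (1/80) * δ ^ (2*σ - 1) with hB
  have hApos : 0 < A := by rw [hA]; positivity
  have hBpos : 0 < B := by rw [hB]; positivity
  have hA1 : 1 ≤ A := by
    rw [hA, show σ - 1 = -(1 - σ) by ring, Real.rpow_neg hδ0.le, ← div_eq_mul_inv,
      one_le_div (Real.rpow_pos_of_pos hδ0 _)]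
    exact h40
  have hB1 : 1 ≤ B := by
    rw [hB, show 2*σ - 1 = -(1 - 2*σ) by ring, Real.rpow_neg hδ0.le, ← div_eq_mul_inv,
      one_le_div (Real.rpow_pos_of_pos hδ0 _)]
    exact h80
  set M : ℕ := ⌊A⌋₊ with hMdef
  set K : ℕ := ⌊B⌋₊ with hKdef
  have hM1 : 1 ≤ M := Nat.le_floor (by exact_mod_cast hA1)
  have hK1 : 1 ≤ K := Nat.le_floor (by exact_mod_cast hB1)
  have hMA : (M : ℝ) ≤ A := Nat.floor_le hApos.le
  have hKB : (K : ℝ) ≤ B := Nat.floor_le hBpos.le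
  have hAM : A ≤ (M : ℝ) + 1 := (Nat.lt_floor_add_one A).le
  have hBK : B ≤ (K : ℝ) + 1 := (Nat.lt_floor_add_one B).le
  have hM2A : (M : ℝ) + 1 ≤ 2 * A := by
    have : (1 : ℝ) ≤ (M : ℝ) := by exact_mod_cast hM1
    linarith
  have hK2B : (K : ℝ) + 1 ≤ 2 * B := by
    have : (1 : ℝ) ≤ (K : ℝ) := by exact_mod_cast hK1
    linarith
  -- the parametrization of the lattice
  set f : (Fin n → ℕ) → EuclideanSpace ℝ (Fin n) := fun a =>
    WithLp.toLp 2 (fun j : Fin n => if (j : ℕ) < n - 1 then (a j : ℝ) * δ ^ (-σ)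
      else 2 * (a j : ℝ) * δ ^ (-(2*σ))) with hf
  set T : Finset (Fin n → ℕ) :=
    Fintype.piFinset (fun j : Fin n => Finset.range (if (j : ℕ) < n - 1 then M + 1 else K + 1))
    with hT
  have hmemT : ∀ a : Fin n → ℕ,
      a ∈ T ↔ ∀ j : Fin n, a j < (if (j : ℕ) < n - 1 then M + 1 else K + 1) := by
    intro a
    simp [hT, Fintype.mem_piFinset]
  -- Λ is the image of T under f
  have hΛT : Λ = (f '' (T : Set (Fin n → ℕ))) := by
    rw [hΛ]
    ext z
    simp only [Set.mem_setOf_eq, Set.mem_image, Finset.mem_coe]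
    constructor
    · rintro ⟨h1, q, hq, hzq⟩
      refine ⟨fun j => if h : (j : ℕ) < n - 1 then (h1 j h).choose else q, ?_, ?_⟩
      · rw [hmemT]
        intro j
        by_cases h : (j : ℕ) < n - 1
        · simp only [h, if_true, dif_pos h]
          exact Nat.lt_succ_of_le (Nat.le_floor (h1 j h).choose_spec.1)
        · simp only [h, if_false, dif_neg h]
          exact Nat.lt_succ_of_le (Nat.le_floor hq)
      · rw [hf]
        ext j
        simp only [PiLp.toLp_apply]
        by_cases h : (j : ℕ) < n - 1
        · rw [if_pos h, dif_pos h]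
          exact ((h1 j h).choose_spec.2).symm
        · have hj : (j : ℕ) = n - 1 := by have := j.isLt; omega
          have hje : j = ⟨n - 1, by omega⟩ := Fin.ext hj
          rw [if_neg h, dif_neg h, hje]
          exact hzq.symm
    · rintro ⟨a, ha, rfl⟩
      rw [hmemT] at ha
      constructor
      · intro j hj
        refine ⟨a j, ?_, ?_⟩
        · have h1 : a j < M + 1 := by have := ha j; rwa [if_pos hj] at this
          have h2 : (a j : ℝ) ≤ (M : ℝ) := by exact_mod_cast Nat.lt_succ_iff.mp h1
          exact h2.trans hMA
        · show f a j = _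
          rw [hf]
          simp only [PiLp.toLp_apply, if_pos hj]
      · have hne : ¬ ((n - 1 : ℕ) < n - 1) := lt_irrefl _
        refine ⟨a ⟨n - 1, by omega⟩, ?_, ?_⟩
        · have h1 : a ⟨n - 1, by omega⟩ < K + 1 := by
            have := ha ⟨n - 1, by omega⟩; rwa [if_neg hne] at this
          have h2 : (a ⟨n - 1, by omega⟩ : ℝ) ≤ (K : ℝ) := by
            exact_mod_cast Nat.lt_succ_iff.mp h1
          exact h2.trans hKB
        · show f a _ = _
          rw [hf]
          simp only [PiLp.toLp_apply, if_neg hne]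
  -- cardinality of T
  have hfilter : (Finset.univ.filter (fun j : Fin n => ¬ ((j : ℕ) < n - 1)))
      = {(⟨n - 1, by omega⟩ : Fin n)} := by
    ext j
    have := j.isLt
    simp only [Finset.mem_filter, Finset.mem_univ, true_and, Finset.mem_singleton, Fin.ext_iff]
    omega
  have hcardT : T.card = (M + 1) ^ m * (K + 1) := by
    rw [hT, Fintype.card_piFinset]
    simp only [Finset.card_range]
    rw [Finset.prod_ite (fun _ => M + 1) (fun _ => K + 1), Finset.prod_const, Finset.prod_const,
      hfilter, Finset.card_singleton, pow_one]
    have hc := Finset.card_filter_add_card_filter_not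
      (s := (Finset.univ : Finset (Fin n))) (p := fun j : Fin n => (j : ℕ) < n - 1)
    rw [hfilter] at hc
    simp only [Finset.card_singleton, Finset.card_univ, Fintype.card_fin] at hc
    have : (Finset.univ.filter (fun j : Fin n => (j : ℕ) < n - 1)).card = m := by omega
    rw [this]
  -- distance between distinct lattice points is at least 2
  have h2inv : (2 : ℝ) ≤ δ ^ (-σ) := by
    rw [Real.rpow_neg hδ0.le]
    calc (2:ℝ) = (1/2 : ℝ)⁻¹ := by norm_num
      _ ≤ (δ ^ σ)⁻¹ := inv_anti₀ (Real.rpow_pos_of_pos hδ0 _) h2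
  have h2inv' : (1 : ℝ) ≤ δ ^ (-(2*σ)) := by
    apply Real.one_le_rpow_of_pos_of_le_one_of_nonpos hδ0 hδ1.le
    nlinarith
  have hdist : ∀ a b : Fin n → ℕ, a ≠ b → (2 : ℝ) ≤ dist (f a) (f b) := by
    intro a b hab
    obtain ⟨j, hj⟩ := Function.ne_iff.mp hab
    refine le_trans ?_ (coord_dist_le' (f a) (f b) j)
    have hone : (1 : ℝ) ≤ |(a j : ℝ) - (b j : ℝ)| := by
      have h' : (a j : ℤ) ≠ (b j : ℤ) := by exact_mod_cast hj
      have h1 : (1 : ℤ) ≤ |(a j : ℤ) - (b j : ℤ)| := Int.one_le_abs (sub_ne_zero.mpr h')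
      exact_mod_cast h1
    have hfa : ∀ c : Fin n → ℕ, f c j = if (j : ℕ) < n - 1 then (c j : ℝ) * δ ^ (-σ)
        else 2 * (c j : ℝ) * δ ^ (-(2*σ)) := fun c => by rw [hf]
    rw [Real.dist_eq, hfa a, hfa b]
    by_cases h : (j : ℕ) < n - 1
    · rw [if_pos h, if_pos h, ← sub_mul, abs_mul,
        abs_of_pos (Real.rpow_pos_of_pos hδ0 _)]
      calc (2:ℝ) ≤ δ ^ (-σ) := h2inv
        _ = 1 * δ ^ (-σ) := (one_mul _).symm
        _ ≤ |(a j : ℝ) - (b j : ℝ)| * δ ^ (-σ) :=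
            mul_le_mul_of_nonneg_right hone (Real.rpow_pos_of_pos hδ0 _).le
    · rw [if_neg h, if_neg h]
      have : 2 * (a j : ℝ) * δ ^ (-(2*σ)) - 2 * (b j : ℝ) * δ ^ (-(2*σ))
          = 2 * ((a j : ℝ) - (b j : ℝ)) * δ ^ (-(2*σ)) := by ring
      rw [this, abs_mul, abs_mul, abs_two, abs_of_pos (Real.rpow_pos_of_pos hδ0 _)]
      nlinarith [Real.rpow_pos_of_pos hδ0 (-(2*σ))]
  -- the union over Λ equals the union over T
  have hU : (⋃ z ∈ Λ, Metric.closedBall z 1) = ⋃ a ∈ (T : Set (Fin n → ℕ)),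
      Metric.closedBall (f a) 1 := by
    rw [hΛT, Set.biUnion_image]
  -- measure computations
  have hdisj : (T : Set (Fin n → ℕ)).PairwiseDisjoint (fun a => Metric.ball (f a) 1) := by
    intro a _ b _ hab
    exact Metric.ball_disjoint_ball (by linarith [hdist a b hab])
  have hlower : (T.card : ENNReal) * ωb ≤ volume (⋃ z ∈ Λ, Metric.closedBall z 1) := by
    rw [hU]
    have hsub : (⋃ a ∈ (T : Set (Fin n → ℕ)), Metric.ball (f a) 1)
        ⊆ ⋃ a ∈ (T : Set (Fin n → ℕ)), Metric.closedBall (f a) 1 :=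
      Set.iUnion₂_mono fun a _ => Metric.ball_subset_closedBall
    refine le_trans ?_ (measure_mono hsub)
    rw [show (⋃ a ∈ (T : Set (Fin n → ℕ)), Metric.ball (f a) 1)
        = ⋃ a ∈ T, Metric.ball (f a) 1 from rfl]
    rw [measure_biUnion_finset hdisj (fun a _ => measurableSet_ball)]
    have : ∀ a ∈ T, volume (Metric.ball (f a) 1) = ωb := fun a _ =>
      Measure.addHaar_ball_center volume (f a) 1
    rw [Finset.sum_congr rfl this, Finset.sum_const, nsmul_eq_mul]
  have hupper : volume (⋃ z ∈ Λ, Metric.closedBall z 1) ≤ (T.card : ENNReal) * ωc := by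
    rw [hU]
    refine le_trans (measure_biUnion_finset_le T _) ?_
    have : ∀ a ∈ T, volume (Metric.closedBall (f a) 1) = ωc := fun a _ =>
      Measure.addHaar_closedBall_center volume (f a) 1
    rw [Finset.sum_congr rfl this, Finset.sum_const, nsmul_eq_mul]
  -- numeric estimates
  have hn1 : ((n : ℝ) - 1) = ((m : ℕ) : ℝ) := by
    rw [hm]
    push_cast [Nat.cast_sub (by omega : 1 ≤ n)]
    ring
  have hsplit : δ ^ e = (δ ^ (σ - 1)) ^ m * δ ^ (2*σ - 1) := by
    rw [he, hn1, show (σ - 1) * ((m : ℕ) : ℝ) + 2*σ - 1 = (σ - 1) * ((m : ℕ) : ℝ) + (2*σ - 1)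
      by ring, Real.rpow_add hδ0, Real.rpow_mul hδ0.le, Real.rpow_natCast]
  have hABe : (1/40 : ℝ) ^ m * (1/80) * δ ^ e = A ^ m * B := by
    rw [hsplit, hA, hB, mul_pow]
    ring
  have hNr : ((T.card : ℕ) : ℝ) = ((M : ℝ) + 1) ^ m * ((K : ℝ) + 1) := by
    rw [hcardT]
    push_cast
    ring
  have hABN : A ^ m * B ≤ ((T.card : ℕ) : ℝ) := by
    rw [hNr]
    exact mul_le_mul (pow_le_pow_left₀ hApos.le hAM m) hBK hBpos.le (by positivity)
  have hNAB : ((T.card : ℕ) : ℝ) ≤ 2 ^ n * (A ^ m * B) := by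
    rw [hNr]
    calc ((M : ℝ) + 1) ^ m * ((K : ℝ) + 1)
        ≤ (2 * A) ^ m * (2 * B) :=
          mul_le_mul (pow_le_pow_left₀ (by positivity) hM2A m) hK2B (by positivity) (by positivity)
      _ = 2 ^ n * (A ^ m * B) := by
          rw [mul_pow, show n = m + 1 by omega]
          ring
  constructor
  · refine le_trans ?_ hlower
    have hre : (1/40 : ℝ) ^ m * (1/80) * ωb.toReal * δ ^ e
        ≤ ((T.card : ℕ) : ℝ) * ωb.toReal := by
      have : (1/40 : ℝ) ^ m * (1/80) * ωb.toReal * δ ^ e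
          = ((1/40 : ℝ) ^ m * (1/80) * δ ^ e) * ωb.toReal := by ring
      rw [this, hABe]
      exact mul_le_mul_of_nonneg_right hABN hωbr.le
    calc ENNReal.ofReal ((1/40 : ℝ) ^ m * (1/80) * ωb.toReal * δ ^ e)
        ≤ ENNReal.ofReal (((T.card : ℕ) : ℝ) * ωb.toReal) := ENNReal.ofReal_le_ofReal hre
      _ = (T.card : ENNReal) * ωb := by
          rw [ENNReal.ofReal_mul (Nat.cast_nonneg _), ENNReal.ofReal_toReal hωbt,
            ENNReal.ofReal_natCast]
  · refine le_trans hupper ?_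
    have hre : ((T.card : ℕ) : ℝ) * ωc.toReal
        ≤ 2 ^ n * (1/40 : ℝ) ^ m * (1/80) * ωc.toReal * δ ^ e := by
      have h1 : 2 ^ n * (1/40 : ℝ) ^ m * (1/80) * ωc.toReal * δ ^ e
          = (2 ^ n * ((1/40 : ℝ) ^ m * (1/80) * δ ^ e)) * ωc.toReal := by ring
      rw [h1, hABe]
      exact mul_le_mul_of_nonneg_right hNAB hωcr.le
    calc (T.card : ENNReal) * ωc
        = ENNReal.ofReal (((T.card : ℕ) : ℝ) * ωc.toReal) := by
          rw [ENNReal.ofReal_mul (Nat.cast_nonneg _), ENNReal.ofReal_toReal hωct,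
            ENNReal.ofReal_natCast]
      _ ≤ ENNReal.ofReal (2 ^ n * (1/40 : ℝ) ^ m * (1/80) * ωc.toReal * δ ^ e) :=
          ENNReal.ofReal_le_ofReal hre
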